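/- Let k be a field, A a finitely generated commutative k-algebra graded by a finitely generated additive abelian group G, and let H ≤ G be any subgroup. Then the Veronese subalgebra A_H = ⊕_{h∈H} A_h is a finitely generated k-algebra. -/

import Mathlib

/-- Gordan-type lemma: a "full" additive submonoid of `ι → ℕ` (closed under
truncated subtraction of comparable elements) is finitely generated. -/
lemma gordan_fg {ι : Type*} [Finite ι] (S : AddSubmonoid (ι → ℕ))
    (hfull : ∀ a b : ι → ℕ, a ∈ S → b ∈ S → a ≤ b → b - a ∈ S) : S.FG := by
  classical
  cases nonempty_fintype ι
  set M : Set (ι → ℕ) := {s | s ∈ S ∧ s ≠ 0 ∧ ∀ t ∈ S, t ≠ 0 → t ≤ s → t = s} with hM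
  have hanti : IsAntichain (· ≤ ·) M := by
    rintro a ⟨haS, ha0, _⟩ b ⟨hbS, hb0, hbmin⟩ hne hle
    exact hne (hbmin a haS ha0 hle)
  have hMfin : M.Finite := hanti.finite_of_partiallyWellOrderedOn (Set.isPWO_of_wellQuasiOrderedLE M)
  have key : ∀ N (s : ι → ℕ), s ∈ S → (∑ i, s i) ≤ N → s ∈ AddSubmonoid.closure M := by
    intro N
    induction N with
    | zero =>
      intro s _ hsum
      have : s = 0 := by
        funext i
        have := Finset.single_le_sum (f := s) (fun j _ => Nat.zero_le _) (Finset.mem_univ i)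
        simp only [Pi.zero_apply]
        omega
      rw [this]; exact zero_mem _
    | succ N ih =>
      intro s hs hsum
      by_cases h0 : s = 0
      · rw [h0]; exact zero_mem _
      by_cases hmin : s ∈ M
      · exact AddSubmonoid.subset_closure hmin
      · have : ∃ t ∈ S, t ≠ 0 ∧ t ≤ s ∧ t ≠ s := by
          by_contra hc
          push_neg at hc
          exact hmin ⟨hs, h0, fun t ht ht0 hle => hc t ht ht0 hle⟩
        obtain ⟨t, htS, ht0, htle, htne⟩ := this
        have hst : s - t + t = s := by
          funext i; exact Nat.sub_add_cancel (htle i)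
        have hstS : s - t ∈ S := hfull t s htS hs htle
        have hst0 : s - t ≠ 0 := by
          intro h
          rw [h, zero_add] at hst
          exact htne hst
        have hsum_eq : (∑ i, (s - t) i) + (∑ i, t i) = ∑ i, s i := by
          rw [← Finset.sum_add_distrib]
          exact Finset.sum_congr rfl fun i _ => by
            have := congrFun hst i
            simpa using this
        have hpos : ∀ u : ι → ℕ, u ≠ 0 → 1 ≤ ∑ i, u i := by
          intro u hu
          by_contra hle
          push_neg at hle
          exact hu (funext fun i => by
            have := Finset.single_le_sum (f := u) (fun j _ => Nat.zero_le _) (Finset.mem_univ i)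
            simp only [Pi.zero_apply]
            omega)
        have h1 := hpos _ ht0
        have h2 := hpos _ hst0
        have := ih (s - t) hstS (by omega)
        have := ih t htS (by omega)
        have : s - t + t ∈ AddSubmonoid.closure M := AddSubmonoid.add_mem _ ‹s - t ∈ _› ‹t ∈ _›
        rwa [hst] at this
  refine (AddSubmonoid.fg_iff S).2 ⟨M, le_antisymm ?_ ?_, hMfin⟩
  · exact AddSubmonoid.closure_le.2 fun x hx => hx.1
  · exact fun s hs => key (∑ i, s i) s hs le_rfl


/-- The Veronese subalgebra `A_H = ⊕_{h ∈ H} A_h` of a finitely generated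
`k`-algebra `A` graded by a finitely generated abelian group `G` is a finitely
generated `k`-algebra, for any subgroup `H ≤ G`. -/
theorem veronese_fg_of_finiteType
    {k A G : Type*} [Field k] [CommRing A] [Algebra k A]
    [AddCommGroup G] [AddGroup.FG G] [DecidableEq G]
    (𝒜 : G → Submodule k A) [GradedAlgebra 𝒜]
    [Algebra.FiniteType k A]
    (H : AddSubgroup G) :
    (Algebra.adjoin k (⋃ h ∈ (H : Set G), (𝒜 h : Set A))).FG := by
  classical
  obtain ⟨s, hs⟩ : ∃ s : Finset A, Algebra.adjoin k (s : Set A) = ⊤ :=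
    Algebra.FiniteType.out
  -- the set of homogeneous components of the generators
  set T : Set A := ⋃ a ∈ (s : Set A),
      (fun g => (DirectSum.decompose 𝒜 a g : A)) '' ↑(DFinsupp.support (DirectSum.decompose 𝒜 a))
    with hT
  have hTfin : T.Finite :=
    Set.Finite.biUnion s.finite_toSet fun a _ => (Finset.finite_toSet _).image _
  have hThom : ∀ x ∈ T, ∃ g, x ∈ 𝒜 g := by
    intro x hx
    simp only [hT, Set.mem_iUnion, Set.mem_image] at hx
    obtain ⟨a, _, g, _, rfl⟩ := hx
    exact ⟨g, (DirectSum.decompose 𝒜 a g).2⟩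
  have hTtop : Algebra.adjoin k T = ⊤ := by
    rw [← top_le_iff, ← hs]
    apply Algebra.adjoin_le
    intro a ha
    rw [← DirectSum.sum_support_decompose 𝒜 a]
    apply sum_mem
    intro g hg
    apply Algebra.subset_adjoin
    simp only [hT, Set.mem_iUnion, Set.mem_image]
    exact ⟨a, ha, g, hg, rfl⟩
  haveI := hTfin.to_subtype
  haveI : Fintype ↥T := Fintype.ofFinite _
  choose d hd using fun i : T => hThom i i.2
  -- the monomial map
  set mon : (↥T → ℕ) → A := fun a => ∏ i : T, (i : A) ^ a i with hmon
  set φ : (↥T → ℕ) → G := fun a => ∑ i : T, a i • d i with hφ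
  have hmon_mem : ∀ a, mon a ∈ 𝒜 (φ a) := fun a =>
    SetLike.prod_pow_mem_graded 𝒜 (F := Finset.univ) (g := fun i : T => (i : A)) (i := d) a fun i _ => hd i
  have hmon_zero : mon 0 = 1 := by simp [hmon]
  have hmon_add : ∀ a b, mon (a + b) = mon a * mon b := by
    intro a b
    simp [hmon, pow_add, Finset.prod_mul_distrib]
  have hφ_zero : φ 0 = 0 := by simp [hφ]
  have hφ_add : ∀ a b, φ (a + b) = φ a + φ b := by
    intro a b
    simp [hφ, add_smul, Finset.sum_add_distrib]
  -- the exponent monoid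
  set S : AddSubmonoid (↥T → ℕ) :=
    { carrier := {a | φ a ∈ H}
      zero_mem' := by
        simp only [Set.mem_setOf_eq, hφ_zero]; exact zero_mem H
      add_mem' := fun ha hb => by
        simp only [Set.mem_setOf_eq] at *
        rw [hφ_add]; exact add_mem ha hb } with hS
  have hSfull : ∀ a b : ↥T → ℕ, a ∈ S → b ∈ S → a ≤ b → b - a ∈ S := by
    intro a b ha hb hab
    have hba : b - a + a = b := funext fun i => Nat.sub_add_cancel (hab i)
    have : φ (b - a) + φ a = φ b := by rw [← hφ_add, hba]
    have hφba : φ (b - a) = φ b - φ a := eq_sub_of_add_eq this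
    show φ (b - a) ∈ H
    rw [hφba]
    exact sub_mem hb ha
  obtain ⟨F, hF⟩ := gordan_fg S hSfull
  -- every element of A is in the span of monomials
  have hclosure_sub : ((Submonoid.closure T : Submonoid A) : Set A) ⊆ Set.range mon := by
    have hmul : ∀ x ∈ Set.range mon, ∀ y ∈ Set.range mon, x * y ∈ Set.range mon := by
      rintro _ ⟨a, rfl⟩ _ ⟨b, rfl⟩
      exact ⟨a + b, hmon_add a b⟩
    let R : Submonoid A :=
      { carrier := Set.range mon
        one_mem' := ⟨0, hmon_zero⟩
        mul_mem' := fun hx hy => hmul _ hx _ hy }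
    have hTR : T ⊆ (R : Set A) := by
      intro x hx
      refine ⟨Pi.single ⟨x, hx⟩ 1, ?_⟩
      simp only [hmon]
      rw [Finset.prod_eq_single (⟨x, hx⟩ : T)]
      · simp
      · intro j _ hj
        rw [Pi.single_eq_of_ne hj, pow_zero]
      · intro hc
        exact absurd (Finset.mem_univ _) hc
    exact (Submonoid.closure_le.2 hTR : Submonoid.closure T ≤ R)
  have hmono_span : (⊤ : Submodule k A) ≤ Submodule.span k (Set.range mon) := by
    rw [← Algebra.top_toSubmodule, ← hTtop, Algebra.adjoin_eq_span]
    exact Submodule.span_mono hclosure_sub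
  -- monomials with exponents in S lie in the adjoin of the finitely many monomials
  have hSsub : ∀ a ∈ S, mon a ∈ Algebra.adjoin k (mon '' ↑F) := by
    intro a ha
    rw [← hF] at ha
    induction ha using AddSubmonoid.closure_induction with
    | mem x hx => exact Algebra.subset_adjoin ⟨x, hx, rfl⟩
    | zero => rw [hmon_zero]; exact one_mem _
    | add a b _ _ iha ihb => rw [hmon_add]; exact mul_mem iha ihb
  have hmain : Algebra.adjoin k (⋃ h ∈ (H : Set G), (𝒜 h : Set A))
      = Algebra.adjoin k (mon '' ↑F) := by
    apply le_antisymm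
    · apply Algebra.adjoin_le
      intro v hv
      simp only [Set.mem_iUnion] at hv
      obtain ⟨h, hh, hv⟩ := hv
      have hv1 : v ∈ Submodule.span k (Set.range mon) := hmono_span Submodule.mem_top
      have hproj : GradedAlgebra.proj 𝒜 h v = v := by
        simp [GradedAlgebra.proj_apply, DirectSum.decompose_of_mem_same 𝒜 hv]
      have hvmap : v ∈ Submodule.map (GradedAlgebra.proj 𝒜 h) (Submodule.span k (Set.range mon)) :=
        ⟨v, hv1, hproj⟩
      rw [Submodule.map_span] at hvmap
      have himg : (GradedAlgebra.proj 𝒜 h) '' (Set.range mon) ⊆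
          insert 0 ((Algebra.adjoin k (mon '' ↑F) : Subalgebra k A) : Set A) := by
        rintro _ ⟨_, ⟨a, rfl⟩, rfl⟩
        by_cases hah : φ a = h
        · refine Set.mem_insert_of_mem _ ?_
          have hmem : mon a ∈ 𝒜 h := hah ▸ hmon_mem a
          have : GradedAlgebra.proj 𝒜 h (mon a) = mon a := by
            simp [GradedAlgebra.proj_apply, DirectSum.decompose_of_mem_same 𝒜 hmem]
          rw [this]
          exact hSsub a (show φ a ∈ H from hah ▸ hh)
        · have : GradedAlgebra.proj 𝒜 h (mon a) = 0 := by
            simp [GradedAlgebra.proj_apply,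
              DirectSum.decompose_of_mem_ne 𝒜 (hmon_mem a) hah]
          rw [this]
          exact Set.mem_insert _ _
      have hv2 : v ∈ Submodule.span k
          (insert 0 ((Algebra.adjoin k (mon '' ↑F) : Subalgebra k A) : Set A)) :=
        Submodule.span_mono himg hvmap
      rw [Submodule.span_insert_zero] at hv2
      have h2 : Submodule.span k ((Algebra.adjoin k (mon '' ↑F) : Subalgebra k A) : Set A)
          = Subalgebra.toSubmodule (Algebra.adjoin k (mon '' ↑F)) := by
        rw [← Subalgebra.coe_toSubmodule, Submodule.span_eq]
      rw [h2] at hv2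
      exact hv2
    · apply Algebra.adjoin_le
      rintro _ ⟨a, haF, rfl⟩
      apply Algebra.subset_adjoin
      have haS : a ∈ S := by rw [← hF]; exact AddSubmonoid.subset_closure haF
      simp only [Set.mem_iUnion]
      exact ⟨φ a, haS, hmon_mem a⟩
  rw [hmain]
  exact ⟨F.image mon, by rw [Finset.coe_image]⟩
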